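/- Let H be a Hopf algebra over k and B ⊆ A a cleft right H-extension with cleaving map j. Then the map A → B, a ↦ Σ a⁰ j̃(a¹) j(1), is a left B-linear retraction of the inclusion B → A; in particular B is a direct summand of A as a left B-module. -/

import Mathlib

set_option synthInstance.maxHeartbeats 1000000
set_option maxHeartbeats 1000000


open TensorProduct

/-- A right `H`-comodule algebra structure on a `k`-algebra `A`: a coassociative counital
coaction `ρ : A → A ⊗ H` which is a morphism of algebras. -/
structure ComodAlg (k H A : Type*) [CommRing k] [Ring H] [Bialgebra k H]
    [Ring A] [Algebra k A] where
  ρ : A →ₗ[k] A ⊗[k] H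
  coassoc : ∀ a : A,
    TensorProduct.assoc k A H H (TensorProduct.map ρ LinearMap.id (ρ a)) =
      TensorProduct.map LinearMap.id Coalgebra.comul (ρ a)
  counit : ∀ a : A,
    TensorProduct.rid k A (TensorProduct.map LinearMap.id Coalgebra.counit (ρ a)) = a
  map_one : ρ 1 = 1
  map_mul : ∀ a b : A, ρ (a * b) = ρ a * ρ b

namespace ComodAlg

variable {k H A : Type*} [CommRing k] [Ring H] [Bialgebra k H] [Ring A] [Algebra k A]

/-- The subalgebra of coinvariants `B = {a : ρ(a) = a ⊗ 1}` of a comodule algebra. -/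
def coinv (c : ComodAlg k H A) : Subalgebra k A where
  carrier := {a : A | c.ρ a = a ⊗ₜ[k] (1 : H)}
  mul_mem' := by
    intro a b ha hb
    simp only [Set.mem_setOf_eq] at *
    rw [c.map_mul, ha, hb, Algebra.TensorProduct.tmul_mul_tmul, mul_one]
  one_mem' := by
    simp only [Set.mem_setOf_eq, c.map_one, Algebra.TensorProduct.one_def]
  add_mem' := by
    intro a b ha hb
    simp only [Set.mem_setOf_eq] at *
    rw [map_add, ha, hb, TensorProduct.add_tmul]
  algebraMap_mem' := by
    intro r
    simp only [Set.mem_setOf_eq, Algebra.algebraMap_eq_smul_one, map_smul, c.map_one,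
      Algebra.TensorProduct.one_def, TensorProduct.smul_tmul']

end ComodAlg

/-- The convolution product on `Hom_k(H, A)`. -/
noncomputable def conv {k H A : Type*} [CommRing k] [AddCommGroup H] [Module k H]
    [Coalgebra k H] [Ring A] [Algebra k A] (f g : H →ₗ[k] A) : H →ₗ[k] A :=
  LinearMap.mul' k A ∘ₗ TensorProduct.map f g ∘ₗ Coalgebra.comul

/-- The unit `η ∘ ε` of the convolution algebra. -/
noncomputable def convOne (k H A : Type*) [CommRing k] [AddCommGroup H] [Module k H]
    [Coalgebra k H] [Ring A] [Algebra k A] : H →ₗ[k] A :=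
  Algebra.linearMap k A ∘ₗ Coalgebra.counit


section ConvLemmas

variable {k H R S : Type*} [CommRing k] [AddCommGroup H] [Module k H] [Coalgebra k H]
  [Ring R] [Algebra k R] [Ring S] [Algebra k S]

open Coalgebra LinearMap

lemma conv_assoc (f g e : H →ₗ[k] R) : conv (conv f g) e = conv f (conv g e) := by
  have h1 : (mul' k R ∘ₗ TensorProduct.map (mul' k R ∘ₗ TensorProduct.map f g) e)
      = (mul' k R ∘ₗ TensorProduct.map f (mul' k R ∘ₗ TensorProduct.map g e))
        ∘ₗ (TensorProduct.assoc k H H H).toLinearMap := by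
    apply TensorProduct.ext_threefold
    intro x y z
    simp [mul_assoc]
  have h2 : (TensorProduct.assoc k H H H).toLinearMap
        ∘ₗ TensorProduct.map comul LinearMap.id ∘ₗ comul
      = TensorProduct.map LinearMap.id comul ∘ₗ (comul (R := k) (A := H)) :=
    Coalgebra.coassoc
  calc conv (conv f g) e
      = (mul' k R ∘ₗ TensorProduct.map (mul' k R ∘ₗ TensorProduct.map f g) e)
          ∘ₗ TensorProduct.map comul LinearMap.id ∘ₗ comul := by
        unfold conv
        rw [show TensorProduct.map (mul' k R ∘ₗ TensorProduct.map f g ∘ₗ comul) e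
            = TensorProduct.map (mul' k R ∘ₗ TensorProduct.map f g) e
                ∘ₗ TensorProduct.map comul LinearMap.id from by
          rw [← TensorProduct.map_comp]; simp [LinearMap.comp_assoc]]
        simp [LinearMap.comp_assoc]
    _ = (mul' k R ∘ₗ TensorProduct.map f (mul' k R ∘ₗ TensorProduct.map g e))
          ∘ₗ (TensorProduct.assoc k H H H).toLinearMap
          ∘ₗ TensorProduct.map comul LinearMap.id ∘ₗ comul := by
        rw [h1, LinearMap.comp_assoc]
    _ = (mul' k R ∘ₗ TensorProduct.map f (mul' k R ∘ₗ TensorProduct.map g e))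
          ∘ₗ TensorProduct.map LinearMap.id comul ∘ₗ comul := by rw [h2]
    _ = conv f (conv g e) := by
        unfold conv
        rw [show TensorProduct.map f (mul' k R ∘ₗ TensorProduct.map g e ∘ₗ comul)
            = TensorProduct.map f (mul' k R ∘ₗ TensorProduct.map g e)
                ∘ₗ TensorProduct.map LinearMap.id comul from by
          rw [← TensorProduct.map_comp]; simp [LinearMap.comp_assoc]]
        simp [LinearMap.comp_assoc]

lemma conv_one_right (f : H →ₗ[k] R) : conv f (convOne k H R) = f := by
  have h3 : TensorProduct.map f (Algebra.linearMap k R ∘ₗ counit (R := k) (A := H))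
      = TensorProduct.map f (Algebra.linearMap k R)
          ∘ₗ TensorProduct.map LinearMap.id counit := by
    rw [← TensorProduct.map_comp]; simp
  have h4 : TensorProduct.map LinearMap.id counit ∘ₗ comul
      = (TensorProduct.mk k H k).flip 1 :=
    Coalgebra.lTensor_counit_comp_comul
  ext h
  have e0 : TensorProduct.map LinearMap.id counit (comul h) = h ⊗ₜ[k] (1 : k) :=
    LinearMap.congr_fun h4 h
  have e1 : conv f (convOne k H R) h
      = mul' k R (TensorProduct.map f (Algebra.linearMap k R) (h ⊗ₜ[k] (1 : k))) := by
    show mul' k R (TensorProduct.map f (Algebra.linearMap k R ∘ₗ counit) (comul h)) = _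
    rw [h3, LinearMap.comp_apply, e0]
  rw [e1]
  simp

lemma conv_one_left (f : H →ₗ[k] R) : conv (convOne k H R) f = f := by
  have h3 : TensorProduct.map (Algebra.linearMap k R ∘ₗ counit (R := k) (A := H)) f
      = TensorProduct.map (Algebra.linearMap k R) f
          ∘ₗ TensorProduct.map counit LinearMap.id := by
    rw [← TensorProduct.map_comp]; simp
  have h4 : TensorProduct.map counit LinearMap.id ∘ₗ comul
      = TensorProduct.mk k k H 1 :=
    Coalgebra.rTensor_counit_comp_comul
  ext h
  have e0 : TensorProduct.map counit LinearMap.id (comul h) = (1 : k) ⊗ₜ[k] h :=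
    LinearMap.congr_fun h4 h
  have e1 : conv (convOne k H R) f h
      = mul' k R (TensorProduct.map (Algebra.linearMap k R) f ((1 : k) ⊗ₜ[k] h)) := by
    show mul' k R (TensorProduct.map (Algebra.linearMap k R ∘ₗ counit) f (comul h)) = _
    rw [h3, LinearMap.comp_apply, e0]
  rw [e1]
  simp

lemma algHom_comp_conv (ψ : R →ₐ[k] S) (f g : H →ₗ[k] R) :
    ψ.toLinearMap ∘ₗ conv f g = conv (ψ.toLinearMap ∘ₗ f) (ψ.toLinearMap ∘ₗ g) := by
  have h1 : ψ.toLinearMap ∘ₗ mul' k R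
      = mul' k S ∘ₗ TensorProduct.map ψ.toLinearMap ψ.toLinearMap := by
    apply TensorProduct.ext'
    intro x y
    simp
  unfold conv
  rw [← LinearMap.comp_assoc, h1, LinearMap.comp_assoc,
    show TensorProduct.map ψ.toLinearMap ψ.toLinearMap ∘ₗ TensorProduct.map f g ∘ₗ comul
      = TensorProduct.map (ψ.toLinearMap ∘ₗ f) (ψ.toLinearMap ∘ₗ g) ∘ₗ comul from by
        rw [← LinearMap.comp_assoc, ← TensorProduct.map_comp]]

lemma algHom_comp_convOne (ψ : R →ₐ[k] S) :
    ψ.toLinearMap ∘ₗ convOne k H R = convOne k H S := by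
  unfold _root_.convOne
  rw [← LinearMap.comp_assoc]
  congr 1
  apply LinearMap.ext
  intro x
  simp [Algebra.algebraMap_eq_smul_one]

end ConvLemmas

section CleftAux

variable {k H A : Type*} [CommRing k] [Ring H] [HopfAlgebra k H] [Ring A] [Algebra k A]

open Coalgebra

lemma ComodAlg.mem_coinv_iff (c : ComodAlg k H A) {x : A} :
    x ∈ c.coinv ↔ c.ρ x = x ⊗ₜ[k] (1 : H) := Iff.rfl

/-- The coaction as an algebra homomorphism. -/
noncomputable def ComodAlg.ρAlg (c : ComodAlg k H A) : A →ₐ[k] A ⊗[k] H :=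
  AlgHom.ofLinearMap c.ρ c.map_one c.map_mul

end CleftAux

/-- For a cleft extension `B ⊆ A`, the map `a ↦ ∑ a⁰ j̃(a¹) j(1)` is a left `B`-linear
retraction of the inclusion `B → A`; in particular `B` is a direct summand of `A` as a
left `B`-module. -/
theorem cleft_extension_splits
    {k H A : Type*} [CommRing k] [Ring H] [HopfAlgebra k H] [Ring A] [Algebra k A]
    (c : ComodAlg k H A) (j jt : H →ₗ[k] A)
    (hcolin : ∀ h : H, c.ρ (j h) =
      TensorProduct.map j LinearMap.id (Coalgebra.comul (R := k) h))
    (hj1 : conv j jt = convOne k H A) (hj2 : conv jt j = convOne k H A) :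
    -- the map takes values in `B`
    (∀ a : A,
      LinearMap.mul' k A (TensorProduct.map LinearMap.id jt (c.ρ a)) * j 1 ∈ c.coinv) ∧
    -- it restricts to the identity on `B`
    (∀ b ∈ c.coinv,
      LinearMap.mul' k A (TensorProduct.map LinearMap.id jt (c.ρ b)) * j 1 = b) ∧
    -- it is left `B`-linear
    (∀ b ∈ c.coinv, ∀ a : A,
      LinearMap.mul' k A (TensorProduct.map LinearMap.id jt (c.ρ (b * a))) * j 1 =
        b * (LinearMap.mul' k A (TensorProduct.map LinearMap.id jt (c.ρ a)) * j 1)) := by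
  classical
  have hρAL : (ComodAlg.ρAlg c).toLinearMap = c.ρ := rfl
  have hF : c.ρ ∘ₗ j
      = conv ((Algebra.TensorProduct.includeLeft (R := k) (S := k) (A := A) (B := H)).toLinearMap ∘ₗ j)
          (Algebra.TensorProduct.includeRight (R := k) (A := A) (B := H)).toLinearMap := by
    apply LinearMap.ext
    intro h
    have hm : TensorProduct.map j (LinearMap.id (R := k) (M := H))
        = LinearMap.mul' k (A ⊗[k] H)
            ∘ₗ TensorProduct.map
              ((Algebra.TensorProduct.includeLeft (R := k) (S := k) (A := A) (B := H)).toLinearMap ∘ₗ j)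
              (Algebra.TensorProduct.includeRight (R := k) (A := A) (B := H)).toLinearMap := by
      apply TensorProduct.ext'
      intro x y
      simp [Algebra.TensorProduct.tmul_mul_tmul]
    show c.ρ (j h) = _
    rw [hcolin h, hm]
    rfl
  have hFG : conv (c.ρ ∘ₗ j) (c.ρ ∘ₗ jt) = convOne k H (A ⊗[k] H) := by
    rw [← hρAL, ← algHom_comp_conv, hj1, algHom_comp_convOne]
  have h5 : conv ((Algebra.TensorProduct.includeLeft (R := k) (S := k) (A := A) (B := H)).toLinearMap ∘ₗ jt)
        (c.ρ ∘ₗ j)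
      = (Algebra.TensorProduct.includeRight (R := k) (A := A) (B := H)).toLinearMap := by
    rw [hF, ← conv_assoc, ← algHom_comp_conv, hj2, algHom_comp_convOne, conv_one_left]
  have hTheta : conv (Algebra.TensorProduct.includeRight (R := k) (A := A) (B := H)).toLinearMap
        (c.ρ ∘ₗ jt)
      = (Algebra.TensorProduct.includeLeft (R := k) (S := k) (A := A) (B := H)).toLinearMap ∘ₗ jt := by
    rw [← h5, conv_assoc, hFG, conv_one_right]
  have e2 : ∀ h : H,
      LinearMap.mul' k (A ⊗[k] H)
        (TensorProduct.map (Algebra.TensorProduct.includeRight (R := k) (A := A) (B := H)).toLinearMap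
          (c.ρ ∘ₗ jt) (Coalgebra.comul h))
      = jt h ⊗ₜ[k] (1 : H) := by
    intro h
    have := LinearMap.congr_fun hTheta h
    simpa [conv, LinearMap.comp_apply] using this
  have gen : ∀ (y : A) (z : H ⊗[k] H),
      LinearMap.mul' k (A ⊗[k] H)
        (TensorProduct.map LinearMap.id (c.ρ ∘ₗ jt) ((TensorProduct.assoc k A H H).symm (y ⊗ₜ[k] z)))
      = (y ⊗ₜ[k] (1 : H)) * LinearMap.mul' k (A ⊗[k] H)
          (TensorProduct.map (Algebra.TensorProduct.includeRight (R := k) (A := A) (B := H)).toLinearMap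
            (c.ρ ∘ₗ jt) z) := by
    intro y z
    induction z using TensorProduct.induction_on with
    | zero => simp only [TensorProduct.tmul_zero, LinearEquiv.map_zero, map_zero, mul_zero]
    | tmul u v =>
      have huv : (y ⊗ₜ[k] u : A ⊗[k] H) = (y ⊗ₜ[k] (1 : H)) * ((1 : A) ⊗ₜ[k] u) := by
        rw [Algebra.TensorProduct.tmul_mul_tmul, mul_one, one_mul]
      simp only [TensorProduct.assoc_symm_tmul, TensorProduct.map_tmul, LinearMap.mul'_apply,
        LinearMap.comp_apply, LinearMap.id_coe, id_eq, AlgHom.toLinearMap_apply,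
        Algebra.TensorProduct.includeRight_apply]
      rw [huv, mul_assoc]
    | add z₁ z₂ h₁ h₂ =>
      simp only [TensorProduct.tmul_add, map_add, mul_add, h₁, h₂]
  have hmem : ∀ a : A,
      c.ρ (LinearMap.mul' k A (TensorProduct.map LinearMap.id jt (c.ρ a)))
        = (LinearMap.mul' k A (TensorProduct.map LinearMap.id jt (c.ρ a))) ⊗ₜ[k] (1 : H) := by
    intro a
    have stepA : ∀ y : A ⊗[k] H,
        c.ρ (LinearMap.mul' k A (TensorProduct.map LinearMap.id jt y))
          = LinearMap.mul' k (A ⊗[k] H) (TensorProduct.map c.ρ (c.ρ ∘ₗ jt) y) := by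
      intro y
      induction y using TensorProduct.induction_on with
      | zero => simp
      | tmul u h => simp [c.map_mul]
      | add y₁ y₂ h₁ h₂ => simp only [map_add, h₁, h₂]
    have hx : TensorProduct.map c.ρ LinearMap.id (c.ρ a)
        = (TensorProduct.assoc k A H H).symm
            (TensorProduct.map LinearMap.id Coalgebra.comul (c.ρ a)) := by
      rw [← c.coassoc a, LinearEquiv.symm_apply_apply]
    have final : ∀ w : A ⊗[k] H,
        LinearMap.mul' k (A ⊗[k] H)
          (TensorProduct.map LinearMap.id (c.ρ ∘ₗ jt)
            ((TensorProduct.assoc k A H H).symm (TensorProduct.map LinearMap.id Coalgebra.comul w)))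
        = (LinearMap.mul' k A (TensorProduct.map LinearMap.id jt w)) ⊗ₜ[k] (1 : H) := by
      intro w
      induction w using TensorProduct.induction_on with
      | zero => simp only [map_zero, LinearEquiv.map_zero, TensorProduct.zero_tmul]
      | tmul y h =>
        simp only [TensorProduct.map_tmul, LinearMap.id_coe, id_eq]
        rw [gen y (Coalgebra.comul h), e2 h]
        simp [Algebra.TensorProduct.tmul_mul_tmul]
      | add w₁ w₂ h₁ h₂ =>
        simp only [map_add, h₁, h₂, TensorProduct.add_tmul]
    calc c.ρ (LinearMap.mul' k A (TensorProduct.map LinearMap.id jt (c.ρ a)))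
        = LinearMap.mul' k (A ⊗[k] H) (TensorProduct.map c.ρ (c.ρ ∘ₗ jt) (c.ρ a)) :=
          stepA (c.ρ a)
      _ = LinearMap.mul' k (A ⊗[k] H)
            (TensorProduct.map LinearMap.id (c.ρ ∘ₗ jt)
              (TensorProduct.map c.ρ LinearMap.id (c.ρ a))) := by
          rw [show TensorProduct.map c.ρ (c.ρ ∘ₗ jt)
              = TensorProduct.map LinearMap.id (c.ρ ∘ₗ jt)
                  ∘ₗ TensorProduct.map c.ρ LinearMap.id by
            rw [← TensorProduct.map_comp]; simp]
          rw [LinearMap.comp_apply]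
      _ = LinearMap.mul' k (A ⊗[k] H)
            (TensorProduct.map LinearMap.id (c.ρ ∘ₗ jt)
              ((TensorProduct.assoc k A H H).symm
                (TensorProduct.map LinearMap.id Coalgebra.comul (c.ρ a)))) := by rw [hx]
      _ = (LinearMap.mul' k A (TensorProduct.map LinearMap.id jt (c.ρ a))) ⊗ₜ[k] (1 : H) :=
          final (c.ρ a)
  have hj1mem : j 1 ∈ c.coinv := by
    show c.ρ (j 1) = j 1 ⊗ₜ[k] (1 : H)
    have c1 : Coalgebra.comul (R := k) (1 : H) = (1 : H) ⊗ₜ[k] (1 : H) := by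
      rw [Bialgebra.comul_one]; rfl
    rw [hcolin 1, c1]
    simp
  have h11 : jt 1 * j 1 = 1 := by
    have := LinearMap.congr_fun hj2 (1 : H)
    have c1 : Coalgebra.comul (R := k) (1 : H) = (1 : H) ⊗ₜ[k] (1 : H) := by
      rw [Bialgebra.comul_one]; rfl
    simpa [conv, convOne, c1] using this
  refine ⟨?_, ?_, ?_⟩
  · intro a
    exact mul_mem (show _ ∈ c.coinv from hmem a) hj1mem
  · intro b hb
    have hρb : c.ρ b = b ⊗ₜ[k] (1 : H) := hb
    rw [hρb]
    have hb' : LinearMap.mul' k A (TensorProduct.map LinearMap.id jt (b ⊗ₜ[k] (1 : H)))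
        = b * jt 1 := by simp
    rw [hb', mul_assoc, h11, mul_one]
  · intro b hb a
    have hρb : c.ρ b = b ⊗ₜ[k] (1 : H) := hb
    have key : ∀ y : A ⊗[k] H,
        LinearMap.mul' k A (TensorProduct.map LinearMap.id jt ((b ⊗ₜ[k] (1 : H)) * y))
          = b * LinearMap.mul' k A (TensorProduct.map LinearMap.id jt y) := by
      intro y
      induction y using TensorProduct.induction_on with
      | zero => simp
      | tmul u h => simp [Algebra.TensorProduct.tmul_mul_tmul, mul_assoc]
      | add y₁ y₂ h₁ h₂ => simp only [mul_add, map_add, h₁, h₂]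
    rw [c.map_mul, hρb, key (c.ρ a), mul_assoc]
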